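/- If all n agents have identical preferences, the Rawlsian assignment assigns every agent every object with probability 1/n (the uniform bistochastic matrix). -/
import Mathlib


open Finset

/-- An n×n matrix with nonnegative real entries whose rows and columns each sum to 1. -/
def Bistochastic {n : ℕ} (x : Fin n → Fin n → ℝ) : Prop :=
  (∀ i o, 0 ≤ x i o) ∧ (∀ i, ∑ o, x i o = 1) ∧ (∀ o, ∑ i, x i o = 1)

/-- `tailProb rank x i k` = probability that agent `i` receives an object ranked `k`-th
or worse (ranks are 0-indexed: rank 0 = most preferred). -/
def tailProb {n : ℕ} (rank : Fin n → Fin n → Fin n) (x : Fin n → Fin n → ℝ)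
    (i k : Fin n) : ℝ :=
  ∑ o ∈ Finset.univ.filter (fun o => k ≤ rank i o), x i o

/-- The values of `v` rearranged in non-increasing order. -/
noncomputable def sortedDesc {n : ℕ} (v : Fin n → ℝ) : Fin n → ℝ :=
  fun j => v (Tuple.sort (fun i => -v i) j)

/-- Block `t` of `Bvec rank x` is the non-increasing rearrangement of the tail
probabilities at threshold `n-1-t`; so blocks run from the worst rank down. -/
noncomputable def Bvec {n : ℕ} (rank : Fin n → Fin n → Fin n) (x : Fin n → Fin n → ℝ) :
    Fin n → Fin n → ℝ :=
  fun t => sortedDesc (fun i => tailProb rank x i t.rev)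

/-- Lexicographic strict order on doubly-indexed vectors (outer index first). -/
def BlockLexLt {α β : Type*} [LinearOrder α] [LinearOrder β] (u v : α → β → ℝ) : Prop :=
  ∃ t s, u t s < v t s ∧ ∀ t' s', (t' < t ∨ (t' = t ∧ s' < s)) → u t' s' = v t' s'

/-- `x` Rawlsian-dominates `y`. -/
def RDom {n : ℕ} (rank : Fin n → Fin n → Fin n) (x y : Fin n → Fin n → ℝ) : Prop :=
  BlockLexLt (Bvec rank x) (Bvec rank y)

/-- A Rawlsian assignment: a bistochastic matrix not R-dominated by any other. -/
def Rawlsian {n : ℕ} (rank : Fin n → Fin n → Fin n) (x : Fin n → Fin n → ℝ) : Prop :=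
  Bistochastic x ∧ ∀ y, Bistochastic y → ¬ RDom rank y x

/-- If all agents have identical preferences, the Rawlsian assignment is the uniform
bistochastic matrix. -/
theorem rawlsian_identical_prefs {n : ℕ} (hn : 0 < n) (rank : Fin n → Fin n → Fin n)
    (hrank : ∀ i, Function.Bijective (rank i))
    (hsame : ∀ i j, rank i = rank j) :
    Rawlsian rank (fun _ _ => (1 : ℝ) / n) := by
  have hn' : (n : ℝ) ≠ 0 := Nat.cast_ne_zero.mpr hn.ne'
  have hbi : Bistochastic (fun (_ _ : Fin n) => (1 : ℝ) / n) := by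
    refine ⟨fun i o => by positivity, fun i => ?_, fun o => ?_⟩ <;>
      simp [Finset.sum_const, Finset.card_univ, mul_one_div, hn']
  refine ⟨hbi, ?_⟩
  rintro y hy ⟨t, s, hlt, heq⟩
  set k : Fin n := t.rev with hk
  set i0 : Fin n := ⟨0, hn⟩ with hi0
  set S : Finset (Fin n) := Finset.univ.filter (fun o => k ≤ rank i0 o) with hSdef
  have hS : ∀ i, Finset.univ.filter (fun o => k ≤ rank i o) = S := by
    intro i; rw [hSdef, hsame i i0]
  set c : ℝ := (S.card : ℝ) / n with hc
  -- every entry of block t of the uniform matrix equals c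
  have hxval : ∀ j : Fin n, Bvec rank (fun _ _ => (1 : ℝ) / n) t j = c := by
    intro j
    show tailProb rank (fun _ _ => (1 : ℝ) / n) _ k = c
    unfold tailProb
    rw [hS, Finset.sum_const, nsmul_eq_mul, hc]
    ring
  -- sum of block t of y equals S.card
  have hsumy : ∑ j, Bvec rank y t j = (S.card : ℝ) := by
    unfold Bvec sortedDesc
    rw [Equiv.sum_comp (Tuple.sort fun i => -tailProb rank y i t.rev)
      (fun i => tailProb rank y i t.rev)]
    unfold tailProb
    have : ∀ i, ∑ o ∈ Finset.univ.filter (fun o => t.rev ≤ rank i o), y i o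
        = ∑ o ∈ S, y i o := by intro i; rw [← hk, hS]
    rw [Finset.sum_congr rfl fun i _ => this i, Finset.sum_comm]
    simp [hy.2.2]
  -- block t of y is antitone
  have hanti : Antitone (fun j => Bvec rank y t j) := by
    intro j j' hjj'
    have := Tuple.monotone_sort (fun i => -tailProb rank y i t.rev) hjj'
    simpa [Bvec, sortedDesc] using this
  -- every entry of block t of y is ≤ c, strictly at s
  have hle : ∀ j : Fin n, Bvec rank y t j ≤ c := by
    intro j
    rcases lt_trichotomy j s with h | h | h
    · exact le_of_eq ((heq t j (Or.inr ⟨rfl, h⟩)).trans (hxval j))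
    · subst h; exact le_of_lt (by rw [← hxval j] at *; exact hxval j ▸ (hxval j ▸ hlt))
    · calc Bvec rank y t j ≤ Bvec rank y t s := hanti (le_of_lt h)
        _ ≤ c := le_of_lt (hxval s ▸ hlt)
  have hstrict : Bvec rank y t s < c := hxval s ▸ hlt
  have hsum_lt : ∑ j, Bvec rank y t j < ∑ _j : Fin n, c :=
    Finset.sum_lt_sum (fun j _ => hle j) ⟨s, Finset.mem_univ s, hstrict⟩
  rw [hsumy, Finset.sum_const, Finset.card_univ, Fintype.card_fin, nsmul_eq_mul, hc] at hsum_lt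
  have : (S.card : ℝ) = (n : ℝ) * ((S.card : ℝ) / n) := by field_simp
  linarith [hsum_lt, this.ge]
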